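/- Let q > 0 and, for 0 < a ≤ ρ, define λ(a, ρ) = ∫_1^{sinh(ρ)/sinh(a)} (v^{2q} − 1)^{−1/2} · sinh(a) · (1 + v² sinh(a)²)^{−1/2} dv. Then for every fixed ρ > 0, λ(a, ρ) → 0 as a → 0⁺. -/

import Mathlib

/-- The height at radius `ρ` of the profile curve of the r-catenoid with neck radius `a`. -/
noncomputable def catLam (q a ρ : ℝ) : ℝ :=
  ∫ v in (1 : ℝ)..(Real.sinh ρ / Real.sinh a),
    (v ^ (2 * q) - 1) ^ (-(1 : ℝ) / 2) * Real.sinh a *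
      (1 + v ^ 2 * Real.sinh a ^ 2) ^ (-(1 : ℝ) / 2)

open Real MeasureTheory Set Filter intervalIntegral

noncomputable def F (q s v : ℝ) : ℝ :=
  (v ^ (2 * q) - 1) ^ (-(1 : ℝ) / 2) * s * (1 + v ^ 2 * s ^ 2) ^ (-(1 : ℝ) / 2)

lemma F_meas (q s : ℝ) : Measurable (F q s) := by
  unfold F
  fun_prop

lemma F_nonneg {q s : ℝ} (hq : 0 ≤ q) (hs : 0 ≤ s) {v : ℝ} (hv : 1 ≤ v) : 0 ≤ F q s v := by
  have h1 : (0:ℝ) ≤ v ^ (2*q) - 1 := by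
    have : (1:ℝ) ^ (2*q) ≤ v ^ (2*q) := Real.rpow_le_rpow (by norm_num) hv (by linarith)
    simpa using this
  have h2 : (0:ℝ) ≤ 1 + v ^ 2 * s ^ 2 := by positivity
  unfold F
  have := Real.rpow_nonneg h1 (-(1:ℝ)/2)
  have := Real.rpow_nonneg h2 (-(1:ℝ)/2)
  positivity

lemma key_lower {q v : ℝ} (hq : 0 < q) (hv : 1 < v) :
    2 * q * ((v - 1) / v) ≤ v ^ (2 * q) - 1 := by
  have hv0 : (0:ℝ) < v := by linarith
  have hlog : 1 - 1/v ≤ Real.log v := by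
    have h := Real.add_one_le_exp (-Real.log v)
    rw [Real.exp_neg, Real.exp_log hv0] at h
    have : 1/v = v⁻¹ := one_div v
    linarith
  have hexp : 2 * q * Real.log v + 1 ≤ v ^ (2 * q) := by
    have h := Real.add_one_le_exp (2 * q * Real.log v)
    rw [Real.rpow_def_of_pos hv0, mul_comm (Real.log v)]
    linarith
  have hlq : 2 * q * ((v-1)/v) ≤ 2 * q * Real.log v := by
    have h1 : (v-1)/v = 1 - 1/v := by field_simp
    rw [h1]
    have : (0:ℝ) ≤ 2*q := by linarith
    exact mul_le_mul_of_nonneg_left hlog this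
  linarith

lemma head_bound {q s : ℝ} (hq : 0 < q) (hs : 0 < s) {X v : ℝ} (hv1 : 1 ≤ v) (hvX : v ≤ X) :
    F q s v ≤ (2*q) ^ (-(1:ℝ)/2) * X ^ ((1:ℝ)/2) * s * (v - 1) ^ (-(1:ℝ)/2) := by
  rcases eq_or_lt_of_le hv1 with h1 | h1
  · subst h1
    unfold F
    rw [Real.one_rpow]
    norm_num
  have hv0 : (0:ℝ) < v := by linarith
  have hX0 : (0:ℝ) < X := by linarith
  have hkey : 0 < 2 * q * ((v - 1) / v) := mul_pos (by linarith) (div_pos (by linarith) hv0)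
  have hA : (v ^ (2*q) - 1) ^ (-(1:ℝ)/2) ≤ (2 * q * ((v - 1) / v)) ^ (-(1:ℝ)/2) :=
    Real.rpow_le_rpow_of_nonpos hkey (key_lower hq h1) (by norm_num)
  have hsplit : (2 * q * ((v - 1) / v)) ^ (-(1:ℝ)/2)
      = (2*q) ^ (-(1:ℝ)/2) * (v - 1) ^ (-(1:ℝ)/2) * v ^ ((1:ℝ)/2) := by
    rw [Real.mul_rpow (by linarith) (div_nonneg (by linarith) hv0.le),
      Real.div_rpow (by linarith) hv0.le,
      show (-(1:ℝ)/2) = -((1:ℝ)/2) by ring, Real.rpow_neg hv0.le]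
    field_simp
  have hv12 : v ^ ((1:ℝ)/2) ≤ X ^ ((1:ℝ)/2) := Real.rpow_le_rpow hv0.le hvX (by norm_num)
  have hB : (1 + v ^ 2 * s ^ 2) ^ (-(1:ℝ)/2) ≤ 1 :=
    Real.rpow_le_one_of_one_le_of_nonpos (by nlinarith) (by norm_num)
  have hApos : (0:ℝ) ≤ (v ^ (2*q) - 1) ^ (-(1:ℝ)/2) := Real.rpow_nonneg (by nlinarith [key_lower hq h1]) _
  have hBpos : (0:ℝ) ≤ (1 + v ^ 2 * s ^ 2) ^ (-(1:ℝ)/2) := Real.rpow_nonneg (by positivity) _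
  calc F q s v ≤ (v ^ (2*q) - 1) ^ (-(1:ℝ)/2) * s * 1 := by
        unfold F; exact mul_le_mul_of_nonneg_left hB (mul_nonneg hApos hs.le)
    _ = (v ^ (2*q) - 1) ^ (-(1:ℝ)/2) * s := by ring
    _ ≤ ((2*q) ^ (-(1:ℝ)/2) * (v - 1) ^ (-(1:ℝ)/2) * v ^ ((1:ℝ)/2)) * s := by
        rw [← hsplit]; exact mul_le_mul_of_nonneg_right hA hs.le
    _ ≤ ((2*q) ^ (-(1:ℝ)/2) * (v - 1) ^ (-(1:ℝ)/2) * X ^ ((1:ℝ)/2)) * s := by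
        have : (0:ℝ) ≤ (2*q) ^ (-(1:ℝ)/2) * (v - 1) ^ (-(1:ℝ)/2) :=
          mul_nonneg (Real.rpow_nonneg (by linarith) _) (Real.rpow_nonneg (by linarith) _)
        nlinarith [mul_le_mul_of_nonneg_left hv12 this]
    _ = (2*q) ^ (-(1:ℝ)/2) * X ^ ((1:ℝ)/2) * s * (v - 1) ^ (-(1:ℝ)/2) := by ring

lemma tail_bound {q s : ℝ} (hq : 0 < q) (hs : 0 < s) {v : ℝ} (hv : 2 ≤ v) :
    F q s v ≤ (1 - (2:ℝ) ^ (-(2*q))) ^ (-(1:ℝ)/2) * v ^ (-(q+1)) := by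
  have hv0 : (0:ℝ) < v := by linarith
  have h2q : (2:ℝ) ^ (-(2*q)) < 1 :=
    Real.rpow_lt_one_of_one_lt_of_neg one_lt_two (by linarith)
  have hc : (0:ℝ) < 1 - (2:ℝ) ^ (-(2*q)) := by linarith
  have h1 : (1:ℝ) ≤ (2:ℝ) ^ (-(2*q)) * v ^ (2*q) := by
    have h2 : (2:ℝ) ^ (2*q) ≤ v ^ (2*q) := Real.rpow_le_rpow (by norm_num) hv (by linarith)
    have h3 : (1:ℝ) = (2:ℝ) ^ (-(2*q)) * (2:ℝ) ^ (2*q) := by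
      rw [← Real.rpow_add two_pos]; norm_num
    rw [h3]
    exact mul_le_mul_of_nonneg_left h2 (Real.rpow_nonneg (by norm_num) _)
  have hvq : (0:ℝ) < v ^ (2*q) := Real.rpow_pos_of_pos hv0 _
  have h2' : (1 - (2:ℝ) ^ (-(2*q))) * v ^ (2*q) ≤ v ^ (2*q) - 1 := by nlinarith
  have hpos : 0 < (1 - (2:ℝ) ^ (-(2*q))) * v ^ (2*q) := mul_pos hc hvq
  have hA : (v ^ (2*q) - 1) ^ (-(1:ℝ)/2) ≤ ((1 - (2:ℝ) ^ (-(2*q))) * v ^ (2*q)) ^ (-(1:ℝ)/2) :=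
    Real.rpow_le_rpow_of_nonpos hpos h2' (by norm_num)
  have hAsplit : ((1 - (2:ℝ) ^ (-(2*q))) * v ^ (2*q)) ^ (-(1:ℝ)/2)
      = (1 - (2:ℝ) ^ (-(2*q))) ^ (-(1:ℝ)/2) * v ^ (-q) := by
    rw [Real.mul_rpow hc.le hvq.le, ← Real.rpow_mul hv0.le]
    congr 1
    ring
  have hB : s * (1 + v ^ 2 * s ^ 2) ^ (-(1:ℝ)/2) ≤ v ^ (-(1:ℝ)) := by
    have hle : ((v*s)^2 : ℝ) ≤ 1 + v ^ 2 * s ^ 2 := by nlinarith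
    have h3 : (1 + v ^ 2 * s ^ 2) ^ (-(1:ℝ)/2) ≤ ((v*s)^2) ^ (-(1:ℝ)/2) :=
      Real.rpow_le_rpow_of_nonpos (by positivity) hle (by norm_num)
    have h4 : (((v*s)^2 : ℝ)) ^ (-(1:ℝ)/2) = (v*s)⁻¹ := by
      rw [← Real.rpow_natCast (v*s) 2, ← Real.rpow_mul (by positivity)]
      norm_num
      rw [Real.rpow_neg_one]
      ring
    calc s * (1 + v ^ 2 * s ^ 2) ^ (-(1:ℝ)/2) ≤ s * (v*s)⁻¹ := by
          exact mul_le_mul_of_nonneg_left (h3.trans_eq h4) hs.le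
      _ = v⁻¹ := by field_simp
      _ = v ^ (-(1:ℝ)) := (Real.rpow_neg_one v).symm
  have hABnn : (0:ℝ) ≤ s * (1 + v ^ 2 * s ^ 2) ^ (-(1:ℝ)/2) :=
    mul_nonneg hs.le (Real.rpow_nonneg (by positivity) _)
  have hC1nn : (0:ℝ) ≤ (1 - (2:ℝ) ^ (-(2*q))) ^ (-(1:ℝ)/2) * v ^ (-q) :=
    mul_nonneg (Real.rpow_nonneg hc.le _) (Real.rpow_nonneg hv0.le _)
  calc F q s v = (v ^ (2*q) - 1) ^ (-(1:ℝ)/2) * (s * (1 + v ^ 2 * s ^ 2) ^ (-(1:ℝ)/2)) := by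
        unfold F; ring
    _ ≤ ((1 - (2:ℝ) ^ (-(2*q))) ^ (-(1:ℝ)/2) * v ^ (-q)) * (v ^ (-(1:ℝ))) :=
        mul_le_mul (hA.trans_eq hAsplit) hB hABnn hC1nn
    _ = (1 - (2:ℝ) ^ (-(2*q))) ^ (-(1:ℝ)/2) * v ^ (-(q+1)) := by
        rw [mul_assoc, ← Real.rpow_add hv0]
        congr 2
        ring

lemma int_head {X : ℝ} (hX : 1 ≤ X) :
    ∫ v in (1:ℝ)..X, (v - 1) ^ (-(1:ℝ)/2) = 2 * (X - 1) ^ ((1:ℝ)/2) := by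
  have h := intervalIntegral.integral_comp_sub_right (a := (1:ℝ)) (b := X)
    (fun x : ℝ => x ^ (-(1:ℝ)/2)) 1
  rw [h]
  norm_num
  rw [integral_rpow (Or.inl (by norm_num))]
  norm_num
  ring

lemma intInt_head {X : ℝ} (hX : 1 ≤ X) :
    IntervalIntegrable (fun v : ℝ => (v - 1) ^ (-(1:ℝ)/2)) volume 1 X := by
  have h0 : IntervalIntegrable (fun x : ℝ => x ^ (-(1:ℝ)/2)) volume 0 (X - 1) :=
    intervalIntegral.intervalIntegrable_rpow' (by norm_num)
  simpa using h0.comp_sub_right 1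

lemma F_intInt {q s : ℝ} (hq : 0 < q) (hs : 0 < s) {X : ℝ} (hX : 1 ≤ X) :
    IntervalIntegrable (F q s) volume 1 X := by
  rw [intervalIntegrable_iff_integrableOn_Ioc_of_le hX]
  have hg : IntegrableOn
      (fun v : ℝ => (2*q) ^ (-(1:ℝ)/2) * X ^ ((1:ℝ)/2) * s * (v - 1) ^ (-(1:ℝ)/2))
      (Ioc 1 X) volume := by
    have := (intInt_head hX).const_mul ((2*q) ^ (-(1:ℝ)/2) * X ^ ((1:ℝ)/2) * s)
    rw [intervalIntegrable_iff_integrableOn_Ioc_of_le hX] at this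
    exact this
  refine hg.mono' ((F_meas q s).aestronglyMeasurable.restrict) ?_
  refine (ae_restrict_iff' measurableSet_Ioc).2 (ae_of_all _ fun v hv => ?_)
  rw [Real.norm_eq_abs, abs_of_nonneg (F_nonneg hq.le hs.le hv.1.le)]
  exact head_bound hq hs hv.1.le hv.2

lemma int_tail {q V T : ℝ} (hq : 0 < q) (hV : 2 ≤ V) (hVT : V ≤ T) :
    ∫ v in V..T, v ^ (-(q+1)) = (V ^ (-q) - T ^ (-q)) / q := by
  rw [integral_rpow (Or.inr ⟨by intro h; apply hq.ne'; linarith [neg_injective h],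
    by rw [Set.uIcc_of_le hVT]; intro h; linarith [h.1]⟩)]
  rw [show -(q+1)+1 = -q by ring]
  rw [div_eq_div_iff (by linarith) hq.ne']
  ring

lemma intInt_tail {q V T : ℝ} (hq : 0 < q) (hV : 2 ≤ V) (hVT : V ≤ T) :
    IntervalIntegrable (fun v : ℝ => v ^ (-(q+1))) volume V T := by
  apply ContinuousOn.intervalIntegrable
  intro x hx
  rw [Set.uIcc_of_le hVT] at hx
  exact (Real.continuousAt_rpow_const x _ (Or.inl (by intro h; linarith [hx.1]))).continuousWithinAt

lemma catLam_eq (q a ρ : ℝ) :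
    catLam q a ρ = ∫ v in (1:ℝ)..(Real.sinh ρ / Real.sinh a), F q (Real.sinh a) v := rfl

/-- For every fixed `ρ > 0`, `λ(a, ρ) → 0` as `a → 0⁺`. -/
theorem stmt_16 (q ρ : ℝ) (hq : 0 < q) (hρ : 0 < ρ) :
    Filter.Tendsto (fun a => catLam q a ρ) (nhdsWithin 0 (Set.Ioi 0)) (nhds 0) := by
  rw [NormedAddCommGroup.tendsto_nhds_zero]
  intro ε hε
  set C₁ : ℝ := (1 - (2:ℝ) ^ (-(2*q))) ^ (-(1:ℝ)/2) with hC₁def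
  have hC₁ : 0 < C₁ := Real.rpow_pos_of_pos
    (by linarith [Real.rpow_lt_one_of_one_lt_of_neg (one_lt_two (α := ℝ)) (by linarith : -(2*q) < 0)]) _
  -- choose V
  obtain ⟨V, hVtail, hV2⟩ : ∃ V : ℝ, C₁ * (V ^ (-q) / q) < ε/2 ∧ 2 ≤ V := by
    have h2 : Tendsto (fun V : ℝ => C₁ * (V ^ (-q) / q)) atTop (nhds (C₁ * (0 / q))) :=
      ((tendsto_rpow_neg_atTop hq).div_const q).const_mul C₁
    rw [zero_div, mul_zero] at h2
    exact ((h2.eventually_lt_const (by linarith : (0:ℝ) < ε/2)).and (eventually_ge_atTop 2)).exists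
  have hV1 : (1:ℝ) ≤ V := by linarith
  set K : ℝ := (2*q) ^ (-(1:ℝ)/2) * V ^ ((1:ℝ)/2) * (2 * (V-1) ^ ((1:ℝ)/2)) + 1 with hKdef
  have hK : 0 < K := by
    have h1 : (0:ℝ) ≤ (2*q) ^ (-(1:ℝ)/2) := Real.rpow_nonneg (by linarith) _
    have h2 : (0:ℝ) ≤ V ^ ((1:ℝ)/2) := Real.rpow_nonneg (by linarith) _
    have h3 : (0:ℝ) ≤ (V-1) ^ ((1:ℝ)/2) := Real.rpow_nonneg (by linarith) _
    have h4 := mul_nonneg (mul_nonneg h1 h2) (mul_nonneg (by norm_num : (0:ℝ) ≤ 2) h3)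
    rw [hKdef]
    linarith
  have hsinhρ : 0 < Real.sinh ρ := Real.sinh_pos_iff.2 hρ
  set δ : ℝ := min (Real.sinh ρ / (V+1)) ((ε/2) / K) with hδdef
  have hδ : 0 < δ := lt_min (by positivity) (by positivity)
  have hs_tend : Tendsto (fun a => Real.sinh a) (nhdsWithin 0 (Set.Ioi 0)) (nhds 0) := by
    have h := (Real.continuous_sinh.tendsto 0).mono_left (nhdsWithin_le_nhds (s := Set.Ioi 0))
    rwa [Real.sinh_zero] at h
  filter_upwards [self_mem_nhdsWithin, hs_tend.eventually_lt_const hδ] with a ha hsδ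
  have hs0 : 0 < Real.sinh a := Real.sinh_pos_iff.2 ha
  set s : ℝ := Real.sinh a with hsdef
  set T : ℝ := Real.sinh ρ / s with hTdef
  have hVT : V ≤ T := by
    have h1 : s < Real.sinh ρ / (V+1) := lt_of_lt_of_le hsδ (min_le_left _ _)
    rw [lt_div_iff₀ (by linarith : (0:ℝ) < V + 1)] at h1
    exact (le_div_iff₀ hs0).2 (by nlinarith)
  have h1T : (1:ℝ) ≤ T := le_trans hV1 hVT
  have hI1V : IntervalIntegrable (F q s) volume 1 V := F_intInt hq hs0 hV1
  have hI1T : IntervalIntegrable (F q s) volume 1 T := F_intInt hq hs0 h1T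
  have hIVT : IntervalIntegrable (F q s) volume V T := by
    apply hI1T.mono_set
    rw [Set.uIcc_of_le hVT, Set.uIcc_of_le h1T]
    exact Set.Icc_subset_Icc hV1 le_rfl
  have hsplit : catLam q a ρ = (∫ v in (1:ℝ)..V, F q s v) + ∫ v in V..T, F q s v := by
    rw [catLam_eq]
    exact (intervalIntegral.integral_add_adjacent_intervals hI1V hIVT).symm
  have hnn : 0 ≤ catLam q a ρ := by
    rw [catLam_eq]
    exact intervalIntegral.integral_nonneg h1T fun u hu => F_nonneg hq.le hs0.le hu.1
  have hhead : (∫ v in (1:ℝ)..V, F q s v)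
      ≤ (2*q) ^ (-(1:ℝ)/2) * V ^ ((1:ℝ)/2) * s * (2 * (V-1) ^ ((1:ℝ)/2)) := by
    have hmono := intervalIntegral.integral_mono_on hV1 hI1V
      ((intInt_head hV1).const_mul ((2*q) ^ (-(1:ℝ)/2) * V ^ ((1:ℝ)/2) * s))
      (fun v hv => by
        have := head_bound (X := V) hq hs0 hv.1 hv.2
        simpa [mul_assoc] using this)
    calc (∫ v in (1:ℝ)..V, F q s v)
        ≤ ∫ v in (1:ℝ)..V, (2*q) ^ (-(1:ℝ)/2) * V ^ ((1:ℝ)/2) * s * ((v-1) ^ (-(1:ℝ)/2)) := hmono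
      _ = (2*q) ^ (-(1:ℝ)/2) * V ^ ((1:ℝ)/2) * s * (2 * (V-1) ^ ((1:ℝ)/2)) := by
          rw [intervalIntegral.integral_const_mul, int_head hV1]
  have htail : (∫ v in V..T, F q s v) ≤ C₁ * (V ^ (-q) / q) := by
    have hmono := intervalIntegral.integral_mono_on hVT hIVT
      ((intInt_tail hq hV2 hVT).const_mul C₁)
      (fun v hv => tail_bound hq hs0 (le_trans hV2 hv.1))
    have hTnn : (0:ℝ) ≤ T ^ (-q) := Real.rpow_nonneg (by linarith) _
    calc (∫ v in V..T, F q s v) ≤ ∫ v in V..T, C₁ * v ^ (-(q+1)) := hmono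
      _ = C₁ * ((V ^ (-q) - T ^ (-q)) / q) := by
          rw [intervalIntegral.integral_const_mul, int_tail hq hV2 hVT]
      _ ≤ C₁ * (V ^ (-q) / q) :=
          mul_le_mul_of_nonneg_left ((div_le_div_iff_of_pos_right hq).2 (by linarith)) hC₁.le
  have habs : ‖catLam q a ρ‖ = catLam q a ρ := by
    rw [Real.norm_eq_abs, abs_of_nonneg hnn]
  have hsK : K * s < ε / 2 := by
    have h1 : s < (ε/2) / K := lt_of_lt_of_le hsδ (min_le_right _ _)
    rw [lt_div_iff₀ hK] at h1
    linarith [h1]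
  rw [habs, hsplit]
  have hheadK : (2*q) ^ (-(1:ℝ)/2) * V ^ ((1:ℝ)/2) * s * (2 * (V-1) ^ ((1:ℝ)/2)) ≤ K * s := by
    rw [hKdef]
    nlinarith [hs0]
  linarith
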